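/- arXiv:1407.7192 — 2 statements merged into one kernel-verified Lean document; each statement's English description precedes it below -/
import Mathlib

section
/- If $b \le B/10$ and $0 < a < bm$, and $A_0, A_1, \ldots, A_m$ is a $(b,B)$-bounded submartingale (i.e., $A_i - b \le A_{i+1} \le A_i + B$ for all $i$), then $\Pr[A_m \le A_0 - a] \le \exp(-a^2/(3bmB))$. -/
open MeasureTheory Real
set_option maxHeartbeats 1000000

lemma exp_quad_pos {t : ℝ} (h0 : 0 ≤ t) (h1 : t ≤ 1) :
    Real.exp t ≤ 1 + t + (3/4) * t^2 := by
  have h := Real.exp_bound' h0 h1 (n := 2) (by norm_num)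
  simp [Finset.sum_range_succ, Nat.factorial] at h
  nlinarith [h]

lemma exp_quad_neg {t : ℝ} (h0 : 0 ≤ t) (h1 : t ≤ 1/2) :
    Real.exp (-t) ≤ 1 - t + (11/18) * t^2 := by
  have habs : |(-t)| ≤ 1 := by rw [abs_neg, abs_of_nonneg h0]; linarith
  have h := Real.exp_bound habs (n := 3) (by norm_num)
  simp [Finset.sum_range_succ, Nat.factorial, abs_neg, abs_of_nonneg h0] at h
  have h' := abs_sub_le_iff.1 h
  nlinarith [h'.1, h'.2, sq_nonneg t, mul_le_mul_of_nonneg_right h1 (sq_nonneg t)]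

lemma exp_chord {lam b B y : ℝ} (hb : 0 < b) (hB : 0 < B) (h1 : -b ≤ y) (h2 : y ≤ B) :
    Real.exp (-(lam * y)) ≤ (B * Real.exp (lam*b) + b * Real.exp (-(lam*B))) / (b+B)
      + (Real.exp (-(lam*B)) - Real.exp (lam*b)) / (b+B) * y := by
  have hbB : 0 < b + B := by linarith
  have ht : 0 ≤ (B - y)/(b+B) := by apply div_nonneg <;> linarith
  have hs : 0 ≤ (y + b)/(b+B) := by apply div_nonneg <;> linarith
  have hts : (B - y)/(b+B) + (y + b)/(b+B) = 1 := by field_simp; ring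
  have key := convexOn_exp.2 (Set.mem_univ (lam*b)) (Set.mem_univ (-(lam*B))) ht hs hts
  have harg : ((B - y)/(b+B)) • (lam*b) + ((y + b)/(b+B)) • (-(lam*B)) = -(lam*y) := by
    simp only [smul_eq_mul]
    rw [div_mul_eq_mul_div, div_mul_eq_mul_div, ← add_div, div_eq_iff hbB.ne']; ring
  rw [harg] at key
  simp only [smul_eq_mul] at key
  calc Real.exp (-(lam*y)) ≤ (B - y)/(b+B) * Real.exp (lam*b) + (y + b)/(b+B) * Real.exp (-(lam*B)) := key
    _ = (B * Real.exp (lam*b) + b * Real.exp (-(lam*B))) / (b+B)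
      + (Real.exp (-(lam*B)) - Real.exp (lam*b)) / (b+B) * y := by field_simp; ring

/-- Azuma-type bound for (b,B)-bounded submartingales. -/
theorem submartingale_lower_deviation_bound
    {Ω : Type*} {m0 : MeasurableSpace Ω} {μ : Measure Ω} [IsProbabilityMeasure μ]
    (ℱ : Filtration ℕ m0) (A : ℕ → Ω → ℝ) (b B : ℝ) (m : ℕ) (a : ℝ)
    (hb : 0 < b) (hB : 0 < B) (hbB : b ≤ B / 10) (ha : 0 < a) (ham : a < b * m)
    (hsub : Submartingale A ℱ μ)
    (hbdd : ∀ i : ℕ, ∀ᵐ ω ∂μ, A i ω - b ≤ A (i + 1) ω ∧ A (i + 1) ω ≤ A i ω + B) :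
    μ {ω | A m ω ≤ A 0 ω - a} ≤ ENNReal.ofReal (Real.exp (-a ^ 2 / (3 * b * m * B))) := by
  have hm0 : 0 < (m : ℝ) := by
    by_contra h
    push_neg at h
    nlinarith [mul_nonpos_of_nonneg_of_nonpos hb.le h]
  set lam : ℝ := a / (2 * m * b * B) with hlam_def
  have hlam : 0 < lam := by positivity
  have hbBpos : (0:ℝ) < b + B := by linarith
  set K : ℝ := (B * Real.exp (lam*b) + b * Real.exp (-(lam*B))) / (b+B) with hK_def
  have hKpos : 0 < K := by positivity
  set beta : ℝ := (Real.exp (-(lam*B)) - Real.exp (lam*b)) / (b+B) with hbeta_def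
  have hbeta : beta ≤ 0 := by
    apply div_nonpos_of_nonpos_of_nonneg _ hbBpos.le
    have : -(lam*B) ≤ lam*b := by nlinarith
    linarith [Real.exp_le_exp.2 this]
  -- bounds on lam*b, lam*B
  have hlb : lam * b ≤ 1 := by
    rw [hlam_def, div_mul_eq_mul_div, div_le_one (by positivity)]
    nlinarith
  have hlB2 : lam * B ≤ 1/2 := by
    rw [hlam_def, div_mul_eq_mul_div, div_le_iff₀ (by positivity)]
    nlinarith
  -- the deviation processes
  set Z : ℕ → Ω → ℝ := fun n ω => Real.exp (-(lam * (A n ω - A 0 ω))) with hZ_def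
  have hmeasZ : ∀ n, StronglyMeasurable[ℱ n] (Z n) := fun n =>
    Real.continuous_exp.comp_stronglyMeasurable
      ((((hsub.stronglyAdapted n).sub ((hsub.stronglyAdapted 0).mono (ℱ.mono (Nat.zero_le n)))).const_mul lam).neg)
  have hlow : ∀ n : ℕ, ∀ᵐ ω ∂μ, A 0 ω - n * b ≤ A n ω := by
    intro n
    induction n with
    | zero => simp
    | succ n ih =>
        filter_upwards [ih, hbdd n] with ω h1 h2
        push_cast
        linarith [h2.1]
  have hZbdd : ∀ n : ℕ, ∀ᵐ ω ∂μ, ‖Z n ω‖ ≤ Real.exp (lam * (n * b)) := by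
    intro n
    filter_upwards [hlow n] with ω h1
    rw [Real.norm_eq_abs, abs_of_pos (Real.exp_pos _), Real.exp_le_exp]
    nlinarith
  have hZint : ∀ n, Integrable (Z n) μ := by
    intro n
    exact Integrable.mono' (integrable_const (Real.exp (lam * (n * b))))
      (((hmeasZ n).mono (ℱ.le n)).aestronglyMeasurable) (hZbdd n)
  -- key one-step estimate
  have hstep : ∀ n : ℕ, ∫ ω, Z (n+1) ω ∂μ ≤ K * ∫ ω, Z n ω ∂μ := by
    intro n
    set W : Ω → ℝ := fun ω => Real.exp (-(lam * (A (n+1) ω - A n ω))) with hW_def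
    have hWmeas : AEStronglyMeasurable W μ :=
      ((Real.continuous_exp.comp_stronglyMeasurable
        ((((hsub.stronglyAdapted (n+1)).sub ((hsub.stronglyAdapted n).mono (ℱ.mono (Nat.le_succ n)))).const_mul
          lam).neg)).mono (ℱ.le (n+1))).aestronglyMeasurable
    have hWbdd : ∀ᵐ ω ∂μ, ‖W ω‖ ≤ Real.exp (lam * b) := by
      filter_upwards [hbdd n] with ω h
      rw [Real.norm_eq_abs, abs_of_pos (Real.exp_pos _), Real.exp_le_exp]
      nlinarith [h.1]
    have hWint : Integrable W μ :=
      Integrable.mono' (integrable_const _) hWmeas hWbdd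
    have hZW : Z (n+1) = Z n * W := by
      funext ω
      simp only [hZ_def, hW_def, Pi.mul_apply, ← Real.exp_add]
      ring_nf
    have hZWint : Integrable (Z n * W) μ := by
      rw [← hZW]; exact hZint (n+1)
    have hcond : μ[Z n * W|ℱ n] =ᵐ[μ] Z n * μ[W|ℱ n] :=
      condExp_stronglyMeasurable_mul_of_bound (ℱ.le n) (hmeasZ n) hWint _ (hZbdd n)
    -- conditional bound on W
    have hWle : μ[W|ℱ n] ≤ᵐ[μ] fun _ => K := by
      have hD : Integrable (A (n+1) - A n) μ := (hsub.integrable (n+1)).sub (hsub.integrable n)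
      have hptwise : W ≤ᵐ[μ] (fun _ => K) + beta • (A (n+1) - A n) := by
        filter_upwards [hbdd n] with ω h
        have := exp_chord (lam := lam) hb hB (by linarith [h.1] : -b ≤ A (n+1) ω - A n ω)
          (by linarith [h.2] : A (n+1) ω - A n ω ≤ B)
        simpa [hK_def, hbeta_def] using this
      have hGint : Integrable ((fun _ => K) + beta • (A (n+1) - A n)) μ :=
        (integrable_const _).add (hD.smul beta)
      have h1 : μ[W|ℱ n] ≤ᵐ[μ] μ[(fun _ => K) + beta • (A (n+1) - A n)|ℱ n] :=
        condExp_mono hWint hGint hptwise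
      have h2 : μ[(fun _ => K) + beta • (A (n+1) - A n)|ℱ n]
          =ᵐ[μ] (fun _ => K) + beta • μ[A (n+1) - A n|ℱ n] := by
        refine (condExp_add (integrable_const _) (hD.smul beta) (ℱ n)).trans ?_
        filter_upwards [condExp_smul (μ := μ) (m := ℱ n) beta (A (n+1) - A n)] with ω hω
        simp only [Pi.add_apply, condExp_const (ℱ.le n) K, hω, Pi.smul_apply, smul_eq_mul]
      have h3 : 0 ≤ᵐ[μ] μ[A (n+1) - A n|ℱ n] := hsub.condExp_sub_nonneg (Nat.le_succ n)
      filter_upwards [h1, h2, h3] with ω hω1 hω2 hω3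
      have : beta * (μ[A (n+1) - A n|ℱ n]) ω ≤ 0 :=
        mul_nonpos_of_nonpos_of_nonneg hbeta hω3
      calc (μ[W|ℱ n]) ω ≤ _ := hω1
        _ = K + beta * (μ[A (n+1) - A n|ℱ n]) ω := by rw [hω2]; simp
        _ ≤ K := by linarith
    calc ∫ ω, Z (n+1) ω ∂μ = ∫ ω, (Z n * W) ω ∂μ := by rw [hZW]
      _ = ∫ ω, (μ[Z n * W|ℱ n]) ω ∂μ := (integral_condExp (ℱ.le n)).symm
      _ = ∫ ω, (Z n * μ[W|ℱ n]) ω ∂μ := integral_congr_ae hcond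
      _ ≤ ∫ ω, Z n ω * K ∂μ := by
          refine integral_mono_ae (integrable_condExp.congr hcond)
            ((hZint n).mul_const K) ?_
          filter_upwards [hWle] with ω hω
          exact mul_le_mul_of_nonneg_left hω (Real.exp_pos _).le
      _ = K * ∫ ω, Z n ω ∂μ := by rw [integral_mul_const]; ring
  have hiter : ∀ n : ℕ, ∫ ω, Z n ω ∂μ ≤ K ^ n := by
    intro n
    induction n with
    | zero => simp [hZ_def]
    | succ n ih =>
        calc ∫ ω, Z (n+1) ω ∂μ ≤ K * ∫ ω, Z n ω ∂μ := hstep n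
          _ ≤ K * K ^ n := by nlinarith
          _ = K ^ (n+1) := by ring
  -- Markov
  have hmark := mul_meas_ge_le_integral_of_nonneg
    (μ := μ) (f := Z m) (ae_of_all _ fun ω => (Real.exp_pos _).le) (hZint m)
    (Real.exp (lam * a))
  have hsubset : {ω | A m ω ≤ A 0 ω - a} ⊆ {ω | Real.exp (lam * a) ≤ Z m ω} := by
    intro ω h
    simp only [Set.mem_setOf_eq] at h ⊢
    rw [hZ_def, Real.exp_le_exp]
    nlinarith
  have hne : μ {ω | A m ω ≤ A 0 ω - a} ≠ ⊤ := measure_ne_top μ _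
  have htoReal : (μ {ω | A m ω ≤ A 0 ω - a}).toReal
      ≤ Real.exp (-(lam * a)) * K ^ m := by
    have hmono : (μ {ω | A m ω ≤ A 0 ω - a}).toReal
        ≤ (μ {ω | Real.exp (lam * a) ≤ Z m ω}).toReal :=
      ENNReal.toReal_mono (measure_ne_top μ _) (measure_mono hsubset)
    have h2 : Real.exp (lam * a) * (μ {ω | Real.exp (lam * a) ≤ Z m ω}).toReal ≤ K ^ m :=
      hmark.trans (hiter m)
    rw [Real.exp_neg]
    rw [inv_mul_eq_div, le_div_iff₀ (Real.exp_pos _)]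
    calc (μ {ω | A m ω ≤ A 0 ω - a}).toReal * Real.exp (lam*a)
        ≤ (μ {ω | Real.exp (lam * a) ≤ Z m ω}).toReal * Real.exp (lam*a) := by
          apply mul_le_mul_of_nonneg_right hmono (Real.exp_pos _).le
      _ ≤ K ^ m := by rw [mul_comm]; exact h2
  -- numeric estimate
  have hnum : Real.exp (-(lam * a)) * K ^ m ≤ Real.exp (-a ^ 2 / (3 * b * m * B)) := by
    have hE1 : Real.exp (lam * b) ≤ 1 + lam * b + (3/4) * (lam * b)^2 :=
      exp_quad_pos (by positivity) hlb
    have hE2 : Real.exp (-(lam * B)) ≤ 1 - lam * B + (11/18) * (lam * B)^2 :=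
      exp_quad_neg (by positivity) hlB2
    set c : ℝ := ((3/4) * b + (11/18) * B) / (b + B) with hc_def
    have hc23 : c ≤ 2/3 := by
      rw [hc_def, div_le_iff₀ hbBpos]
      nlinarith
    have hcpos : 0 < c := by positivity
    have hKle : K ≤ 1 + lam^2 * b * B * c := by
      rw [hK_def, div_le_iff₀ hbBpos, hc_def]
      have h1 : B * Real.exp (lam*b) ≤ B * (1 + lam * b + (3/4) * (lam * b)^2) :=
        mul_le_mul_of_nonneg_left hE1 hB.le
      have h2 : b * Real.exp (-(lam*B)) ≤ b * (1 - lam * B + (11/18) * (lam * B)^2) :=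
        mul_le_mul_of_nonneg_left hE2 hb.le
      calc B * Real.exp (lam*b) + b * Real.exp (-(lam*B))
          ≤ B * (1 + lam * b + (3/4) * (lam * b)^2) + b * (1 - lam * B + (11/18) * (lam * B)^2) := by
            linarith
        _ = (1 + lam^2 * b * B * (((3/4) * b + (11/18) * B) / (b + B))) * (b + B) := by
            field_simp
            ring
    have hKexp : K ≤ Real.exp (lam^2 * b * B * c) :=
      hKle.trans (by linarith [Real.add_one_le_exp (lam^2 * b * B * c)])
    have hKm : K ^ m ≤ Real.exp (lam^2 * b * B * c) ^ m :=
      pow_le_pow_left₀ hKpos.le hKexp m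
    have hfinal : Real.exp (-(lam * a)) * Real.exp (lam^2 * b * B * c) ^ m
        ≤ Real.exp (-a ^ 2 / (3 * b * m * B)) := by
      rw [← Real.exp_nat_mul, ← Real.exp_add, Real.exp_le_exp]
      have h5 : lam * ((m:ℝ) * b * B) = a / 2 := by
        rw [hlam_def]; field_simp
      have hkey : -(lam * a) + m * (lam^2 * b * B * c) ≤ -a ^ 2 / (3 * b * m * B) := by
        rw [le_div_iff₀ (by positivity : (0:ℝ) < 3 * b * (m:ℝ) * B)]
        have e : (-(lam * a) + (m:ℝ) * (lam^2 * b * B * c)) * (3 * b * (m:ℝ) * B) =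
            (lam * ((m:ℝ) * b * B)) * (-3 * a) + 3 * c * (lam * ((m:ℝ) * b * B))^2 := by ring
        rw [e, h5]
        nlinarith [mul_le_mul_of_nonneg_right hc23 (sq_nonneg a)]
      linarith [hkey]
    calc Real.exp (-(lam * a)) * K ^ m
        ≤ Real.exp (-(lam * a)) * Real.exp (lam^2 * b * B * c) ^ m := by
          apply mul_le_mul_of_nonneg_left hKm (Real.exp_pos _).le
      _ ≤ _ := hfinal
  calc μ {ω | A m ω ≤ A 0 ω - a}
      = ENNReal.ofReal ((μ {ω | A m ω ≤ A 0 ω - a}).toReal) := (ENNReal.ofReal_toReal hne).symm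
    _ ≤ ENNReal.ofReal (Real.exp (-(lam * a)) * K ^ m) := ENNReal.ofReal_le_ofReal htoReal
    _ ≤ ENNReal.ofReal (Real.exp (-a ^ 2 / (3 * b * m * B))) := ENNReal.ofReal_le_ofReal hnum
end

section
/- If $b \le B/10$ and $0 < a < bm$, and $A_0, A_1, \ldots, A_m$ is a $(b,B)$-bounded supermartingale, then $\Pr[A_m \ge A_0 + a] \le \exp(-a^2/(3bmB))$. -/
open MeasureTheory Real


lemma exp_le_aux {u : ℝ} (h0 : 0 ≤ u) (h1 : u ≤ 3/4) :
    Real.exp u ≤ 1 + u + (2/3) * u ^ 2 := by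
  have h := Real.exp_bound' h0 (by linarith) (n := 3) (by norm_num)
  simp [Finset.sum_range_succ, Nat.factorial] at h
  nlinarith [pow_nonneg h0 2, pow_nonneg h0 3, sq_nonneg u]

lemma L_le_aux {t b B : ℝ} (hb : 0 < b) (hB : 0 < B) (ht : 0 ≤ t)
    (htu : t * (B + b) ≤ 3/4) :
    (B * Real.exp (-(t*b)) + b * Real.exp (t*B)) / (B + b)
      ≤ Real.exp ((2/3) * b * (B + b) * t ^ 2) := by
  set u := t * (B + b) with hu
  have hBb : 0 < B + b := by linarith
  have hu0 : 0 ≤ u := mul_nonneg ht hBb.le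
  have hexpu : Real.exp u ≤ 1 + u + (2/3) * u ^ 2 := exp_le_aux hu0 htu
  have hsplit : Real.exp (t*B) = Real.exp (-(t*b)) * Real.exp u := by
    rw [← Real.exp_add, hu]; ring_nf
  have key : (B * Real.exp (-(t*b)) + b * Real.exp (t*B)) / (B + b)
      = Real.exp (-(t*b)) * (1 + b * (Real.exp u - 1) / (B + b)) := by
    rw [hsplit]; field_simp; ring
  rw [key]
  have h1 : 1 + b * (Real.exp u - 1) / (B + b) ≤ Real.exp (b * (Real.exp u - 1) / (B + b)) := by
    have := Real.add_one_le_exp (b * (Real.exp u - 1) / (B + b)); linarith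
  have h2 : b * (Real.exp u - 1) / (B + b) ≤ t*b + (2/3) * b * (B + b) * t ^ 2 := by
    have hle : Real.exp u - 1 ≤ u + (2/3) * u ^ 2 := by linarith
    have : b * (Real.exp u - 1) / (B + b) ≤ b * (u + (2/3) * u ^ 2) / (B + b) := by
      gcongr
    refine this.trans (le_of_eq ?_)
    rw [hu]; field_simp
  calc Real.exp (-(t*b)) * (1 + b * (Real.exp u - 1) / (B + b))
      ≤ Real.exp (-(t*b)) * Real.exp (b * (Real.exp u - 1) / (B + b)) := by
        exact mul_le_mul_of_nonneg_left h1 (Real.exp_pos _).le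
    _ = Real.exp (-(t*b) + b * (Real.exp u - 1) / (B + b)) := (Real.exp_add _ _).symm
    _ ≤ Real.exp ((2/3) * b * (B + b) * t ^ 2) := by
        apply Real.exp_le_exp.2; linarith

lemma chord_aux {t b B x : ℝ} (hb : 0 < b) (hB : 0 < B)
    (hx1 : -b ≤ x) (hx2 : x ≤ B) :
    Real.exp (t * x) ≤ (B * Real.exp (-(t*b)) + b * Real.exp (t*B)) / (B + b)
      + x * ((Real.exp (t*B) - Real.exp (-(t*b))) / (B + b)) := by
  have hBb : 0 < B + b := by linarith
  have hθ : t * x = ((B - x)/(B+b)) * (-(t*b)) + ((x + b)/(B+b)) * (t*B) := by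
    field_simp; ring
  have hconv := convexOn_exp.2 (Set.mem_univ (-(t*b))) (Set.mem_univ (t*B))
    (by apply div_nonneg <;> linarith : (0:ℝ) ≤ (B - x)/(B+b)) (by apply div_nonneg <;> linarith : (0:ℝ) ≤ (x + b)/(B+b))
    (by field_simp; ring : (B - x)/(B+b) + (x + b)/(B+b) = 1)
  simp only [smul_eq_mul] at hconv
  rw [hθ]
  refine hconv.trans (le_of_eq ?_)
  field_simp; ring

set_option maxHeartbeats 1000000 in
/-- Azuma-type bound for (b,B)-bounded supermartingales. -/
theorem supermartingale_upper_deviation_bound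
    {Ω : Type*} {m0 : MeasurableSpace Ω} {μ : Measure Ω} [IsProbabilityMeasure μ]
    (ℱ : Filtration ℕ m0) (A : ℕ → Ω → ℝ) (b B : ℝ) (m : ℕ) (a : ℝ)
    (hb : 0 < b) (hB : 0 < B) (hbB : b ≤ B / 10) (ha : 0 < a) (ham : a < b * m)
    (hsup : Supermartingale A ℱ μ)
    (hbdd : ∀ i : ℕ, ∀ᵐ ω ∂μ, A i ω - b ≤ A (i + 1) ω ∧ A (i + 1) ω ≤ A i ω + B) :
    μ {ω | A m ω ≥ A 0 ω + a} ≤ ENNReal.ofReal (Real.exp (-a ^ 2 / (3 * b * m * B))) := by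
  classical
  have hm0 : 0 < (m : ℝ) := by
    rcases lt_or_ge 0 (m:ℝ) with h | h
    · exact h
    · exfalso; nlinarith
  have hBb : 0 < B + b := by linarith
  obtain ⟨t, ht_def⟩ : ∃ t : ℝ, t = 3 * a / (4 * ↑m * b * (B + b)) := ⟨_, rfl⟩
  have hDpos : 0 < 4 * (m:ℝ) * b * (B + b) := by positivity
  have ht : 0 < t := by rw [ht_def]; exact div_pos (by linarith) hDpos
  have htu : t * (B + b) ≤ 3/4 := by
    rw [ht_def, div_mul_eq_mul_div, div_le_iff₀ hDpos]
    nlinarith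
  set L := (B * Real.exp (-(t*b)) + b * Real.exp (t*B)) / (B + b) with hL_def
  have hLpos : 0 < L := by
    apply div_pos _ hBb
    have := Real.exp_pos (-(t*b)); have := Real.exp_pos (t*B); nlinarith
  set c2 := (Real.exp (t*B) - Real.exp (-(t*b))) / (B + b) with hc2_def
  have hc2nn : 0 ≤ c2 := by
    apply div_nonneg _ hBb.le
    have : Real.exp (-(t*b)) ≤ Real.exp (t*B) := Real.exp_le_exp.2 (by nlinarith)
    linarith
  set f : ℕ → Ω → ℝ := fun n ω => Real.exp (t * (A n ω - A 0 ω)) with hf_def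
  set Y : ℕ → Ω → ℝ := fun n => A (n+1) - A n with hY_def
  -- measurability
  have hfFmeas : ∀ n, StronglyMeasurable[ℱ n] (f n) := by
    intro n
    exact (Real.continuous_exp.comp_stronglyMeasurable
      (((hsup.stronglyMeasurable n).sub
        ((hsup.stronglyMeasurable 0).mono (ℱ.mono (Nat.zero_le n)))).const_mul t))
  have hmeas : ∀ n, AEStronglyMeasurable (f n) μ :=
    fun n => ((hfFmeas n).mono (ℱ.le n)).aestronglyMeasurable
  -- a.e. upper bound on increments
  have hub : ∀ n : ℕ, ∀ᵐ ω ∂μ, A n ω - A 0 ω ≤ n * B := by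
    intro n
    induction n with
    | zero => filter_upwards with ω; simp
    | succ n ih =>
      filter_upwards [ih, hbdd n] with ω h1 h2
      push_cast; nlinarith [h2.2]
  have hfb : ∀ n : ℕ, ∀ᵐ ω ∂μ, ‖f n ω‖ ≤ Real.exp (t * (n * B)) := by
    intro n
    filter_upwards [hub n] with ω h1
    rw [Real.norm_eq_abs, abs_of_pos (Real.exp_pos _)]
    exact Real.exp_le_exp.2 (by nlinarith)
  have hIntf : ∀ n, Integrable (f n) μ := fun n =>
    Integrable.mono' (integrable_const _) (hmeas n) (hfb n)
  have hYint : ∀ n, Integrable (Y n) μ :=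
    fun n => (hsup.integrable (n+1)).sub (hsup.integrable n)
  have hfYint : ∀ n, Integrable (f n * Y n) μ :=
    fun n => Integrable.bdd_mul (hYint n) (hmeas n) (hfb n)
  -- conditional expectation of the increment is nonpositive
  have hYce : ∀ n, (μ[Y n | ℱ n]) ≤ᵐ[μ] 0 := by
    intro n
    have h1 := condExp_sub (μ := μ) (m := ℱ n) (hsup.integrable (n+1)) (hsup.integrable n)
    have h2 := hsup.2.1 n (n+1) (Nat.le_succ n)
    have h3 : μ[A n | ℱ n] = A n :=
      condExp_of_stronglyMeasurable (ℱ.le n) (hsup.stronglyMeasurable n) (hsup.integrable n)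
    filter_upwards [h1, h2] with ω hω1 hω2
    rw [hY_def] at *
    simp only [Pi.sub_apply, Pi.zero_apply] at *
    rw [hω1, h3]
    linarith
  -- key: ∫ f n · Y n ≤ 0
  have hkey : ∀ n, ∫ ω, f n ω * Y n ω ∂μ ≤ 0 := by
    intro n
    have hpull := condExp_mul_of_stronglyMeasurable_left (hfFmeas n) (hfYint n) (hYint n)
    calc ∫ ω, f n ω * Y n ω ∂μ
        = ∫ ω, (μ[f n * Y n | ℱ n]) ω ∂μ := (integral_condExp (ℱ.le n)).symm
      _ = ∫ ω, f n ω * (μ[Y n | ℱ n]) ω ∂μ := integral_congr_ae hpull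
      _ ≤ 0 := by
          apply integral_nonpos_of_ae
          filter_upwards [hYce n] with ω hω
          exact mul_nonpos_of_nonneg_of_nonpos (Real.exp_pos _).le hω
  -- MGF induction
  have hEm : ∀ n, ∫ ω, f n ω ∂μ ≤ L ^ n := by
    intro n
    induction n with
    | zero =>
      have h0 : (f 0) = fun _ => (1:ℝ) := by
        funext ω; simp [hf_def]
      rw [h0, pow_zero]
      simp
    | succ n ih =>
      have hpt : ∀ᵐ ω ∂μ, f (n+1) ω ≤ f n ω * L + c2 * (f n ω * Y n ω) := by
        filter_upwards [hbdd n] with ω hω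
        have hx1 : -b ≤ Y n ω := by simp only [hY_def, Pi.sub_apply]; linarith [hω.1]
        have hx2 : Y n ω ≤ B := by simp only [hY_def, Pi.sub_apply]; linarith [hω.2]
        have hc := chord_aux (t := t) hb hB hx1 hx2
        have hsplit : f (n+1) ω = f n ω * Real.exp (t * Y n ω) := by
          simp only [hf_def, hY_def, Pi.sub_apply, ← Real.exp_add]; ring_nf
        rw [hsplit]
        have := mul_le_mul_of_nonneg_left hc (Real.exp_pos (t * (A n ω - A 0 ω))).le
        simp only [hf_def]
        nlinarith [Real.exp_pos (t * (A n ω - A 0 ω))]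
      have hint_rhs : Integrable (fun ω => f n ω * L + c2 * (f n ω * Y n ω)) μ :=
        ((hIntf n).mul_const L).add ((hfYint n).const_mul c2)
      calc ∫ ω, f (n+1) ω ∂μ
          ≤ ∫ ω, (f n ω * L + c2 * (f n ω * Y n ω)) ∂μ :=
            integral_mono_ae (hIntf (n+1)) hint_rhs hpt
        _ = (∫ ω, f n ω ∂μ) * L + c2 * ∫ ω, f n ω * Y n ω ∂μ := by
            have hA : ∫ ω, (f n ω * L + c2 * (f n ω * Y n ω)) ∂μ
                = (∫ ω, f n ω * L ∂μ) + ∫ ω, c2 * (f n ω * Y n ω) ∂μ :=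
              integral_add ((hIntf n).mul_const L) ((hfYint n).const_mul c2)
            rw [hA, integral_mul_const, integral_const_mul]
        _ ≤ L ^ n * L + c2 * 0 := by
            have h1 : (∫ ω, f n ω ∂μ) * L ≤ L ^ n * L :=
              mul_le_mul_of_nonneg_right ih hLpos.le
            have h2 : c2 * (∫ ω, f n ω * Y n ω ∂μ) ≤ c2 * 0 :=
              mul_le_mul_of_nonneg_left (hkey n) hc2nn
            linarith
        _ = L ^ (n+1) := by ring
  -- Markov
  have hsub : {ω | A m ω ≥ A 0 ω + a} ⊆ {ω | Real.exp (t*a) ≤ f m ω} := by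
    intro ω hω
    simp only [Set.mem_setOf_eq] at *
    exact Real.exp_le_exp.2 (by nlinarith)
  have hmark := mul_meas_ge_le_integral_of_nonneg
    (μ := μ) (f := f m) (ae_of_all _ fun ω => (Real.exp_pos _).le) (hIntf m) (Real.exp (t*a))
  have hExppos : 0 < Real.exp (t*a) := Real.exp_pos _
  have htoReal : (μ {ω | Real.exp (t*a) ≤ f m ω}).toReal ≤ L ^ m * Real.exp (-(t*a)) := by
    rw [Real.exp_neg, ← div_eq_mul_inv, le_div_iff₀ hExppos]
    calc (μ {ω | Real.exp (t*a) ≤ f m ω}).toReal * Real.exp (t*a)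
        = Real.exp (t*a) * (μ {ω | Real.exp (t*a) ≤ f m ω}).toReal := by ring
      _ ≤ ∫ ω, f m ω ∂μ := hmark
      _ ≤ L ^ m := hEm m
  -- final numeric bound
  have hnum : L ^ m * Real.exp (-(t*a)) ≤ Real.exp (-a ^ 2 / (3 * b * m * B)) := by
    have hLle : L ≤ Real.exp ((2/3) * b * (B + b) * t ^ 2) := L_le_aux hb hB ht.le htu
    have h1 : L ^ m ≤ Real.exp ((2/3) * b * (B + b) * t ^ 2) ^ m :=
      pow_le_pow_left₀ hLpos.le hLle m
    have h2 : Real.exp ((2/3) * b * (B + b) * t ^ 2) ^ m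
        = Real.exp ((m:ℝ) * ((2/3) * b * (B + b) * t ^ 2)) := (Real.exp_nat_mul _ m).symm
    calc L ^ m * Real.exp (-(t*a))
        ≤ Real.exp ((m:ℝ) * ((2/3) * b * (B + b) * t ^ 2)) * Real.exp (-(t*a)) := by
          rw [← h2]; exact mul_le_mul_of_nonneg_right h1 (Real.exp_pos _).le
      _ = Real.exp ((m:ℝ) * ((2/3) * b * (B + b) * t ^ 2) - t*a) := by
          rw [← Real.exp_add]; ring_nf
      _ ≤ Real.exp (-a ^ 2 / (3 * b * m * B)) := by
          apply Real.exp_le_exp.2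
          have hexp_eq : (m:ℝ) * ((2/3) * b * (B + b) * t ^ 2) - t*a
              = -(3 * a^2 / (8 * ((m:ℝ) * b * (B + b)))) := by
            rw [ht_def]; field_simp; ring
          rw [hexp_eq, neg_div, neg_le_neg_iff, div_le_div_iff₀ (by positivity) (by positivity)]
          have h8 : 8 * b ≤ B := by linarith
          nlinarith [mul_nonneg (mul_nonneg (mul_nonneg (sq_nonneg a) hm0.le) hb.le)
            (by linarith : (0:ℝ) ≤ B - 8 * b)]
  calc μ {ω | A m ω ≥ A 0 ω + a}
      ≤ μ {ω | Real.exp (t*a) ≤ f m ω} := measure_mono hsub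
    _ = ENNReal.ofReal ((μ {ω | Real.exp (t*a) ≤ f m ω}).toReal) :=
        (ENNReal.ofReal_toReal (measure_ne_top μ _)).symm
    _ ≤ ENNReal.ofReal (Real.exp (-a ^ 2 / (3 * b * m * B))) :=
        ENNReal.ofReal_le_ofReal (htoReal.trans hnum)
end
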